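/- arXiv:1204.0449 — 2 statements merged into one kernel-verified Lean document; each statement's English description precedes it below -/
import Mathlib

section
/- Let G and H be finite graphs on the same number n of vertices, each with degree bound d and all components of size at most K. If Σ_S |c^G_S − c^H_S| < κ (sum over isomorphism classes S of connected graphs with at most K vertices), then there is a bijection ρ : V(G) → V(H) such that |ρ^{-1}(E(H)) △ E(G)| ≤ d·κ·n. -/
/-- A representative of an isomorphism class of connected graphs with at most `K`
vertices. -/
structure ConnRep (K : ℕ) where
  n : ℕ
  hn : n ≤ K
  graph : SimpleGraph (Fin n)
  conn : graph.Connected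

/-- The component of `v` in `G` (as an induced subgraph) is isomorphic to the
representative `p`. -/
def compClass {V : Type*} {K : ℕ} (G : SimpleGraph V) (v : V) (p : ConnRep K) : Prop :=
  Nonempty (G.induce {w | G.Reachable v w} ≃g p.graph)

namespace Stmt3Aux

open SimpleGraph

variable {K : ℕ}

abbrev rel (K : ℕ) : ConnRep K → ConnRep K → Prop :=
  fun p q => Nonempty (p.graph ≃g q.graph)

abbrev Q (K : ℕ) := Quot (rel K)

lemma rel_equivalence : Equivalence (rel K) :=
  ⟨fun _ => ⟨Iso.refl⟩, fun ⟨f⟩ => ⟨f.symm⟩, fun ⟨f⟩ ⟨g⟩ => ⟨f.trans g⟩⟩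

lemma quot_mk_eq_iff {p q : ConnRep K} :
    Quot.mk (rel K) p = Quot.mk (rel K) q ↔ rel K p q := by
  rw [Quot.eq]
  exact (rel_equivalence).eqvGen_iff

instance : Finite (ConnRep K) := by
  classical
  let f : ConnRep K → Σ n : Fin (K + 1), SimpleGraph (Fin n.1) :=
    fun p => ⟨⟨p.n, Nat.lt_succ_of_le p.hn⟩, p.graph⟩
  have hf : Function.Injective f := by
    rintro ⟨n, hn, g, c⟩ ⟨n', hn', g', c'⟩ h
    injection h with h1 h2
    obtain rfl : n = n' := congrArg Fin.val h1
    rw [heq_iff_eq] at h2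
    subst h2
    rfl
  exact Finite.of_injective f hf

instance : Finite (Q K) := Quot.finite _

end Stmt3Aux

set_option linter.unusedSectionVars false
namespace Stmt3Aux
open SimpleGraph

variable {K : ℕ} {V : Type*} [Fintype V] (G : SimpleGraph V)

lemma supp_eq_reachable (v : V) :
    (G.connectedComponentMk v).supp = {w | G.Reachable v w} := by
  ext w
  simp only [ConnectedComponent.mem_supp_iff, Set.mem_setOf_eq, ConnectedComponent.eq]
  exact ⟨fun h => h.symm, fun h => h.symm⟩

lemma induce_supp_connected (c : G.ConnectedComponent) : (G.induce c.supp).Connected := by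
  classical
  obtain ⟨v, rfl⟩ := Quot.exists_rep c
  have hs : (Quot.mk G.Reachable v : G.ConnectedComponent) = G.connectedComponentMk v := rfl
  rw [hs]
  have hu : v ∈ (G.connectedComponentMk v).supp := by
    rw [ConnectedComponent.mem_supp_iff]
  apply G.induce_connected_of_patches v hu
  intro w hw
  rw [supp_eq_reachable] at hw
  obtain ⟨p⟩ := hw
  refine ⟨{x | x ∈ p.support}, ?_, p.start_mem_support, p.end_mem_support, ?_⟩
  · intro x hx
    rw [supp_eq_reachable]
    exact ⟨p.takeUntil x hx⟩
  · exact (p.connected_induce_support).preconnected _ _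

lemma natCard_supp_le (hK : ∀ v, {w | G.Reachable v w}.ncard ≤ K) (c : G.ConnectedComponent) :
    Nat.card c.supp ≤ K := by
  obtain ⟨v, rfl⟩ := Quot.exists_rep c
  have hs : (Quot.mk G.Reachable v : G.ConnectedComponent) = G.connectedComponentMk v := rfl
  rw [hs, Nat.card_coe_set_eq, supp_eq_reachable]
  exact hK v

variable (hK : ∀ v, {w | G.Reachable v w}.ncard ≤ K)

/-- The representative of a component's isomorphism class, bundled with an isomorphism. -/
noncomputable def compRepP (c : G.ConnectedComponent) :
    Σ' p : ConnRep K, (G.induce c.supp ≃g p.graph) :=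
  letI : Fintype c.supp := Fintype.ofFinite _
  let e := Fintype.equivFin ↥c.supp
  ⟨⟨Fintype.card ↥c.supp,
    by rw [← Nat.card_eq_fintype_card]; exact natCard_supp_le G hK c,
    (G.induce c.supp).comap e.symm.toEmbedding,
    by
      refine (Iso.comap e.symm (G.induce c.supp)).connected_iff.mpr ?_
      exact induce_supp_connected G c⟩,
   (Iso.comap e.symm (G.induce c.supp)).symm⟩

/-- The isomorphism class of a component. -/
noncomputable def clsC (c : G.ConnectedComponent) : Q K := Quot.mk _ (compRepP G hK c).1

/-- A fixed isomorphism from each component to the canonical representative of its class. -/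
noncomputable def theta (c : G.ConnectedComponent) :
    G.induce c.supp ≃g (Quot.out (clsC G hK c)).graph :=
  (compRepP G hK c).2.trans
    ((quot_mk_eq_iff.mp
      (show Quot.mk (rel K) ((compRepP G hK c).1)
          = Quot.mk (rel K) (Quot.out (clsC G hK c)) from (Quot.out_eq _).symm)).some)

/-- Number of components in a given isomorphism class. -/
noncomputable def cntC (S : Q K) : ℕ := Nat.card {c : G.ConnectedComponent // clsC G hK c = S}

noncomputable def eqvC (S : Q K) : {c : G.ConnectedComponent // clsC G hK c = S} ≃ Fin (cntC G hK S) :=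
  letI : Fintype {c : G.ConnectedComponent // clsC G hK c = S} := Fintype.ofFinite _
  (Fintype.equivFin _).trans (finCongr (Nat.card_eq_fintype_card).symm)

/-- Index of a component among those of its class. -/
noncomputable def idxC (c : G.ConnectedComponent) : ℕ :=
  (eqvC G hK (clsC G hK c) ⟨c, rfl⟩ : Fin _).val

lemma idxC_eq_val {S : Q K} (c : G.ConnectedComponent) (hc : clsC G hK c = S) :
    idxC G hK c = (eqvC G hK S ⟨c, hc⟩ : Fin _).val := by subst hc; rfl

lemma idxC_lt (c : G.ConnectedComponent) : idxC G hK c < cntC G hK (clsC G hK c) :=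
  (eqvC G hK (clsC G hK c) ⟨c, rfl⟩).isLt

lemma idxC_inj {c c' : G.ConnectedComponent} (h : clsC G hK c = clsC G hK c')
    (h2 : idxC G hK c = idxC G hK c') : c = c' := by
  rw [idxC_eq_val G hK c h, idxC_eq_val G hK c' rfl] at h2
  have := (eqvC G hK (clsC G hK c')).injective (Fin.val_injective h2)
  exact congrArg Subtype.val this

lemma idxC_surj (S : Q K) (i : ℕ) (hi : i < cntC G hK S) :
    ∃ c, clsC G hK c = S ∧ idxC G hK c = i := by
  refine ⟨((eqvC G hK S).symm ⟨i, hi⟩).1, ((eqvC G hK S).symm ⟨i, hi⟩).2, ?_⟩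
  rw [idxC_eq_val G hK _ ((eqvC G hK S).symm ⟨i, hi⟩).2]
  have h2 : (⟨((eqvC G hK S).symm ⟨i, hi⟩).1, ((eqvC G hK S).symm ⟨i, hi⟩).2⟩ :
      {c : G.ConnectedComponent // clsC G hK c = S}) = (eqvC G hK S).symm ⟨i, hi⟩ := rfl
  rw [h2, (eqvC G hK S).apply_symm_apply]

/-- Class of the component of a vertex. -/
noncomputable def clsV (v : V) : Q K := clsC G hK (G.connectedComponentMk v)

noncomputable def idxV (v : V) : ℕ := idxC G hK (G.connectedComponentMk v)

lemma mem_supp_self (v : V) : v ∈ (G.connectedComponentMk v).supp :=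
  (ConnectedComponent.mem_supp_iff _ _).mpr rfl

/-- Position of a vertex inside the canonical representative of its component's class. -/
noncomputable def posV (v : V) : ℕ :=
  (theta G hK (G.connectedComponentMk v) ⟨v, mem_supp_self G v⟩ : Fin _).val

lemma posV_lt (v : V) : posV G hK v < (Quot.out (clsV G hK v)).n :=
  (theta G hK (G.connectedComponentMk v) ⟨v, mem_supp_self G v⟩).isLt

lemma posV_eq {c : G.ConnectedComponent} (v : V) (h : G.connectedComponentMk v = c)
    (hv : v ∈ c.supp) : ((theta G hK c) ⟨v, hv⟩ : Fin _).val = posV G hK v := by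
  subst h; rfl

lemma posV_inj {u v : V} (h : G.connectedComponentMk u = G.connectedComponentMk v)
    (h2 : posV G hK u = posV G hK v) : u = v := by
  have hv : v ∈ (G.connectedComponentMk u).supp :=
    (ConnectedComponent.mem_supp_iff _ _).mpr h.symm
  rw [← posV_eq G hK u rfl (mem_supp_self G u), ← posV_eq G hK v h.symm hv] at h2
  have := (theta G hK (G.connectedComponentMk u)).injective (Fin.val_injective h2)
  exact congrArg Subtype.val this

lemma adjV {u v : V} (h : G.connectedComponentMk u = G.connectedComponentMk v) :
    G.Adj u v ↔ ∃ (hi : posV G hK u < (Quot.out (clsV G hK u)).n)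
      (hj : posV G hK v < (Quot.out (clsV G hK u)).n),
      (Quot.out (clsV G hK u)).graph.Adj ⟨posV G hK u, hi⟩ ⟨posV G hK v, hj⟩ := by
  have hu : u ∈ (G.connectedComponentMk u).supp := mem_supp_self G u
  have hv : v ∈ (G.connectedComponentMk u).supp :=
    (ConnectedComponent.mem_supp_iff _ _).mpr h.symm
  have k1 : G.Adj u v ↔ (G.induce (G.connectedComponentMk u).supp).Adj ⟨u, hu⟩ ⟨v, hv⟩ := by
    simp
  have key : G.Adj u v ↔ (Quot.out (clsV G hK u)).graph.Adj
      (theta G hK (G.connectedComponentMk u) ⟨u, hu⟩)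
      (theta G hK (G.connectedComponentMk u) ⟨v, hv⟩) :=
    k1.trans ((theta G hK (G.connectedComponentMk u)).map_adj_iff).symm
  rw [key]
  have e1 : (theta G hK (G.connectedComponentMk u) ⟨u, hu⟩ : Fin _)
      = ⟨posV G hK u, by rw [← posV_eq G hK u rfl hu]; exact Fin.isLt _⟩ :=
    Fin.val_injective (posV_eq G hK u rfl hu)
  have e2 : (theta G hK (G.connectedComponentMk u) ⟨v, hv⟩ : Fin _)
      = ⟨posV G hK v, by rw [← posV_eq G hK v h.symm hv]; exact Fin.isLt _⟩ :=
    Fin.val_injective (posV_eq G hK v h.symm hv)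
  rw [e1, e2]
  constructor
  · intro hadj
    exact ⟨_, _, hadj⟩
  · rintro ⟨hi, hj, hadj⟩
    exact hadj

lemma surjV (S : Q K) (i k : ℕ) (hi : i < cntC G hK S) (hk : k < (Quot.out S).n) :
    ∃ v, clsV G hK v = S ∧ idxV G hK v = i ∧ posV G hK v = k := by
  obtain ⟨c, hc, hci⟩ := idxC_surj G hK S i hi
  subst hc
  obtain ⟨⟨v, hv⟩, hvk⟩ : ∃ x : ↥c.supp, theta G hK c x = ⟨k, hk⟩ :=
    ⟨(theta G hK c).symm ⟨k, hk⟩, (theta G hK c).apply_symm_apply _⟩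
  have hcv : G.connectedComponentMk v = c := (ConnectedComponent.mem_supp_iff _ _).mp hv
  refine ⟨v, ?_, ?_, ?_⟩
  · rw [clsV, hcv]
  · rw [idxV, hcv, hci]
  · rw [← posV_eq G hK v hcv hv, hvk]

lemma cls_set (S : Q K) :
    {v : V | ∃ p : ConnRep K, Quot.mk (rel K) p = S ∧ compClass G v p}
      = {v : V | clsV G hK v = S} := by
  ext v
  simp only [Set.mem_setOf_eq]
  constructor
  · rintro ⟨p, hp, ⟨f⟩⟩
    rw [← supp_eq_reachable] at f
    have : rel K p (Quot.out (clsV G hK v)) :=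
      ⟨(f.symm.trans (theta G hK (G.connectedComponentMk v)))⟩
    have h2 : Quot.mk (rel K) p = Quot.mk (rel K) (Quot.out (clsV G hK v)) :=
      quot_mk_eq_iff.mpr this
    rw [Quot.out_eq] at h2
    rw [← hp, h2]
  · intro h
    refine ⟨Quot.out S, Quot.out_eq S, ?_⟩
    rw [compClass, ← supp_eq_reachable]
    rw [← h]
    exact ⟨theta G hK (G.connectedComponentMk v)⟩

lemma card_supp (c : G.ConnectedComponent) :
    Nat.card ↥c.supp = (Quot.out (clsC G hK c)).n := by
  rw [Nat.card_congr (theta G hK c).toEquiv, Nat.card_eq_fintype_card, Fintype.card_fin]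

lemma card_set (S : Q K) (m : ℕ) (hm : m ≤ cntC G hK S) :
    {v : V | clsV G hK v = S ∧ idxV G hK v < m}.ncard = m * (Quot.out S).n := by
  classical
  set A : Finset V := Finset.univ.filter (fun v => clsV G hK v = S ∧ idxV G hK v < m) with hA
  set T : Finset G.ConnectedComponent :=
    Finset.univ.filter (fun c => clsC G hK c = S ∧ idxC G hK c < m) with hT
  have hset : {v : V | clsV G hK v = S ∧ idxV G hK v < m} = (A : Set V) := by
    ext v; simp [hA]
  rw [hset, Set.ncard_coe_finset]
  have hmem : ∀ v ∈ A, G.connectedComponentMk v ∈ T := by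
    intro v hv
    simp only [hA, Finset.mem_filter, Finset.mem_univ, true_and] at hv
    simp only [hT, Finset.mem_filter, Finset.mem_univ, true_and]
    exact hv
  rw [Finset.card_eq_sum_card_fiberwise hmem]
  have hfiber : ∀ c ∈ T, (A.filter (fun v => G.connectedComponentMk v = c)).card
      = (Quot.out S).n := by
    intro c hc
    simp only [hT, Finset.mem_filter, Finset.mem_univ, true_and] at hc
    have : A.filter (fun v => G.connectedComponentMk v = c) = c.supp.toFinset := by
      ext v
      simp only [Finset.mem_filter, Set.mem_toFinset, hA, Finset.mem_univ, true_and,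
        ConnectedComponent.mem_supp_iff]
      constructor
      · rintro ⟨_, h⟩; exact h
      · intro h
        refine ⟨⟨?_, ?_⟩, h⟩
        · rw [clsV, h, hc.1]
        · rw [idxV, h]; exact hc.2
    rw [this, Set.toFinset_card, ← Nat.card_eq_fintype_card, card_supp G hK, hc.1]
  rw [Finset.sum_congr rfl hfiber, Finset.sum_const, smul_eq_mul]
  congr 1
  -- T.card = m
  have : T.card = (Finset.range m).card := by
    apply Finset.card_bij (fun c _ => idxC G hK c)
    · intro c hc
      simp only [hT, Finset.mem_filter, Finset.mem_univ, true_and] at hc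
      exact Finset.mem_range.mpr hc.2
    · intro c hc c' hc' h
      simp only [hT, Finset.mem_filter, Finset.mem_univ, true_and] at hc hc'
      exact idxC_inj G hK (hc.1.trans hc'.1.symm) h
    · intro i hi
      rw [Finset.mem_range] at hi
      obtain ⟨c, hc, hci⟩ := idxC_surj G hK S i (lt_of_lt_of_le hi hm)
      refine ⟨c, ?_, hci⟩
      simp only [hT, Finset.mem_filter, Finset.mem_univ, true_and]
      exact ⟨hc, hci ▸ hi⟩
  rw [this, Finset.card_range]

omit [Fintype V] in
lemma exists_equiv_matching {W T : Type*} [Fintype V] [Fintype W]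
    (hcard : Fintype.card V = Fintype.card W)
    (f : V → T) (g : W → T) (hf : Function.Injective f) (hg : Function.Injective g)
    (D : Set T) (hDf : D ⊆ Set.range f) (hDg : D ⊆ Set.range g) :
    ∃ ρ : V ≃ W, (∀ v, f v ∈ D → g (ρ v) = f v) ∧ (∀ v, f v ∉ D → g (ρ v) ∉ D) := by
  classical
  set A : Set V := {v | f v ∈ D} with hA
  set B : Set W := {w | g w ∈ D} with hB
  have h1 : ∀ a : A, ∃ w, g w = f a.1 := fun a => hDg a.2
  choose φ hφ using h1
  have hφB : ∀ a, φ a ∈ B := fun a => by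
    simp only [hB, Set.mem_setOf_eq, hφ]
    exact a.2
  have hbij : Function.Bijective (fun a : A => (⟨φ a, hφB a⟩ : B)) := by
    constructor
    · intro a b h
      apply Subtype.ext
      apply hf
      rw [← hφ a, ← hφ b]
      exact congrArg (g ∘ Subtype.val) h
    · rintro ⟨w, hw⟩
      obtain ⟨v, hv⟩ := hDf hw
      have hvA : v ∈ A := by simp only [hA, Set.mem_setOf_eq, hv]; exact hw
      refine ⟨⟨v, hvA⟩, ?_⟩
      apply Subtype.ext
      apply hg
      rw [hφ ⟨v, hvA⟩, hv]
  let e1 : A ≃ B := Equiv.ofBijective _ hbij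
  have hAB : Fintype.card A = Fintype.card B := Fintype.card_congr e1
  have hcompl : Fintype.card ↥Aᶜ = Fintype.card ↥Bᶜ := by
    rw [Fintype.card_compl_set, Fintype.card_compl_set, hAB, hcard]
  let e2 : ↥Aᶜ ≃ ↥Bᶜ := Fintype.equivOfCardEq hcompl
  let ρ : V ≃ W := (Equiv.Set.sumCompl A).symm.trans ((e1.sumCongr e2).trans (Equiv.Set.sumCompl B))
  refine ⟨ρ, ?_, ?_⟩
  · intro v hv
    have hvA : v ∈ A := hv
    have hρ : ρ v = (e1 ⟨v, hvA⟩).1 := by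
      simp only [ρ, Equiv.trans_apply, Equiv.Set.sumCompl_symm_apply_of_mem hvA,
        Equiv.sumCongr_apply, Sum.map_inl, Equiv.Set.sumCompl_apply_inl]
    rw [hρ]
    exact hφ ⟨v, hvA⟩
  · intro v hv
    have hvA : v ∉ A := hv
    have hρ : ρ v = (e2 ⟨v, hvA⟩).1 := by
      simp only [ρ, Equiv.trans_apply, Equiv.Set.sumCompl_symm_apply_of_notMem hvA,
        Equiv.sumCongr_apply, Sum.map_inr, Equiv.Set.sumCompl_apply_inr]
    rw [hρ]
    exact (e2 ⟨v, hvA⟩).2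

end Stmt3Aux

open Stmt3Aux SimpleGraph in
/-- If `G`, `H` are finite graphs on `n` vertices with degree bound `d`, all
components of size at most `K`, and `Σ_S |c^G_S − c^H_S| < κ` (sum over isomorphism
classes of connected graphs with at most `K` vertices), then there is a bijection
`ρ : V(G) → V(H)` with `|ρ^{-1}(E(H)) △ E(G)| ≤ d·κ·n`. -/
theorem stmt_3 {V W : Type*} [Fintype V] [Fintype W] (G : SimpleGraph V)
    (H : SimpleGraph W) (d K n : ℕ)
    (hn : Fintype.card V = n) (hn' : Fintype.card W = n)
    (hdG : ∀ v, (G.neighborSet v).ncard ≤ d) (hdH : ∀ w, (H.neighborSet w).ncard ≤ d)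
    (hKG : ∀ v, {w | G.Reachable v w}.ncard ≤ K)
    (hKH : ∀ v, {w | H.Reachable v w}.ncard ≤ K)
    (κ : ℝ)
    (hκ : ∑ᶠ S : Quot (fun p q : ConnRep K => Nonempty (p.graph ≃g q.graph)),
      |({v : V | ∃ p : ConnRep K, Quot.mk _ p = S ∧ compClass G v p}.ncard : ℝ) / n -
        ({w : W | ∃ p : ConnRep K, Quot.mk _ p = S ∧ compClass H w p}.ncard : ℝ) / n|
      < κ) :
    ∃ ρ : V ≃ W,
      ((symmDiff {e : Sym2 V | e.map ρ ∈ H.edgeSet} G.edgeSet).ncard : ℝ)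
        ≤ d * κ * n := by
  classical
  haveI : Fintype (Q K) := Fintype.ofFinite _
  rcases Nat.eq_zero_or_pos n with hn0 | hnpos
  · subst hn0
    haveI : IsEmpty V := Fintype.card_eq_zero_iff.mp hn
    haveI : IsEmpty W := Fintype.card_eq_zero_iff.mp hn'
    refine ⟨Fintype.equivOfCardEq (by rw [hn, hn']), ?_⟩
    have he : (symmDiff {e : Sym2 V | e.map (Fintype.equivOfCardEq (by rw [hn, hn'] : Fintype.card V = Fintype.card W)) ∈ H.edgeSet} G.edgeSet) = ∅ :=
      Set.eq_empty_of_isEmpty _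
    rw [he, Set.ncard_empty]
    simp
  -- main case
  have hκpos : 0 < κ := lt_of_le_of_lt (finsum_nonneg fun S => abs_nonneg _) hκ
  set aG : Q K → ℕ := cntC G hKG with haG
  set aH : Q K → ℕ := cntC H hKH with haH
  set nS : Q K → ℕ := fun S => (Quot.out S).n with hnS
  set goodG : Set V := {v | idxV G hKG v < aH (clsV G hKG v)} with hgoodG
  set goodH : Set W := {w | idxV H hKH w < aG (clsV H hKH w)} with hgoodH
  set fG : V → Q K × ℕ × ℕ := fun v => (clsV G hKG v, idxV G hKG v, posV G hKG v) with hfG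
  set fH : W → Q K × ℕ × ℕ := fun w => (clsV H hKH w, idxV H hKH w, posV H hKH w) with hfH
  have hfGinj : Function.Injective fG := by
    intro u v h
    simp only [hfG, Prod.mk.injEq] at h
    obtain ⟨h1, h2, h3⟩ := h
    exact posV_inj G hKG (idxC_inj G hKG h1 h2) h3
  have hfHinj : Function.Injective fH := by
    intro u v h
    simp only [hfH, Prod.mk.injEq] at h
    obtain ⟨h1, h2, h3⟩ := h
    exact posV_inj H hKH (idxC_inj H hKH h1 h2) h3
  have hGimg : fG '' goodG = {x : Q K × ℕ × ℕ |
      x.2.1 < aG x.1 ∧ x.2.1 < aH x.1 ∧ x.2.2 < nS x.1} := by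
    ext ⟨S, i, k⟩
    simp only [Set.mem_image, Set.mem_setOf_eq]
    constructor
    · rintro ⟨v, hv, he⟩
      simp only [hfG, Prod.mk.injEq] at he
      obtain ⟨h1, h2, h3⟩ := he
      subst h1; subst h2; subst h3
      exact ⟨idxC_lt G hKG _, hv, posV_lt G hKG v⟩
    · rintro ⟨h1, h2, h3⟩
      obtain ⟨v, hc, hi, hp⟩ := surjV G hKG S i k h1 h3
      refine ⟨v, ?_, by simp only [hfG, hc, hi, hp]⟩
      simp only [hgoodG, Set.mem_setOf_eq, hi, hc]
      exact h2
  have hHimg : fH '' goodH = {x : Q K × ℕ × ℕ |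
      x.2.1 < aG x.1 ∧ x.2.1 < aH x.1 ∧ x.2.2 < nS x.1} := by
    ext ⟨S, i, k⟩
    simp only [Set.mem_image, Set.mem_setOf_eq]
    constructor
    · rintro ⟨w, hw, he⟩
      simp only [hfH, Prod.mk.injEq] at he
      obtain ⟨h1, h2, h3⟩ := he
      subst h1; subst h2; subst h3
      exact ⟨hw, idxC_lt H hKH _, posV_lt H hKH w⟩
    · rintro ⟨h1, h2, h3⟩
      obtain ⟨w, hc, hi, hp⟩ := surjV H hKH S i k h2 h3
      refine ⟨w, ?_, by simp only [hfH, hc, hi, hp]⟩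
      simp only [hgoodH, Set.mem_setOf_eq, hi, hc]
      exact h1
  set D : Set (Q K × ℕ × ℕ) := fG '' goodG with hD
  have hDH : D = fH '' goodH := hGimg.trans hHimg.symm
  obtain ⟨ρ, P1, P2⟩ := exists_equiv_matching (hn.trans hn'.symm) fG fH hfGinj hfHinj D
    (by rw [hD]; exact (Set.image_subset_range _ _))
    (by rw [hDH]; exact (Set.image_subset_range _ _))
  refine ⟨ρ, ?_⟩
  have hmemD_G : ∀ v, fG v ∈ D ↔ v ∈ goodG := by
    intro v
    constructor
    · intro h
      rw [hD] at h
      obtain ⟨u, hu, he⟩ := h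
      rwa [← hfGinj he]
    · intro h; rw [hD]; exact Set.mem_image_of_mem _ h
  have hmemD_H : ∀ w, fH w ∈ D ↔ w ∈ goodH := by
    intro w
    constructor
    · intro h
      rw [hDH] at h
      obtain ⟨u, hu, he⟩ := h
      rwa [← hfHinj he]
    · intro h; rw [hDH]; exact Set.mem_image_of_mem _ h
  have hcoord : ∀ v ∈ goodG, fH (ρ v) = fG v := fun v hv => P1 v ((hmemD_G v).mpr hv)
  have hgoodG_comp : ∀ u v : V, G.connectedComponentMk u = G.connectedComponentMk v →
      (u ∈ goodG ↔ v ∈ goodG) := by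
    intro u v h
    simp only [hgoodG, Set.mem_setOf_eq, idxV, clsV, h]
  have hgoodH_comp : ∀ u v : W, H.connectedComponentMk u = H.connectedComponentMk v →
      (u ∈ goodH ↔ v ∈ goodH) := by
    intro u v h
    simp only [hgoodH, Set.mem_setOf_eq, idxV, clsV, h]
  have main_adj : ∀ u v : V, u ∈ goodG → (G.Adj u v ↔ H.Adj (ρ u) (ρ v)) := by
    intro u v hu
    constructor
    · intro hadj
      have hcomp : G.connectedComponentMk u = G.connectedComponentMk v :=
        ConnectedComponent.sound hadj.reachable
      have hv : v ∈ goodG := (hgoodG_comp u v hcomp).mp hu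
      have eu := hcoord u hu
      have ev := hcoord v hv
      simp only [hfG, hfH, Prod.mk.injEq] at eu ev
      obtain ⟨ecu, eiu, epu⟩ := eu
      obtain ⟨ecv, eiv, epv⟩ := ev
      have hcompH : H.connectedComponentMk (ρ u) = H.connectedComponentMk (ρ v) := by
        apply idxC_inj H hKH
        · exact ecu.trans ((congrArg (clsC G hKG) hcomp).trans ecv.symm)
        · exact eiu.trans ((congrArg (idxC G hKG) hcomp).trans eiv.symm)
      rw [adjV G hKG hcomp] at hadj
      rw [adjV H hKH hcompH]
      rw [show clsV H hKH (ρ u) = clsV G hKG u from ecu,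
        show posV H hKH (ρ u) = posV G hKG u from epu,
        show posV H hKH (ρ v) = posV G hKG v from epv]
      exact hadj
    · intro hadj
      have hcompH : H.connectedComponentMk (ρ u) = H.connectedComponentMk (ρ v) :=
        ConnectedComponent.sound hadj.reachable
      have hρu : ρ u ∈ goodH := by
        rw [← hmemD_H (ρ u), hcoord u hu]
        exact (hmemD_G u).mpr hu
      have hρv : ρ v ∈ goodH := (hgoodH_comp _ _ hcompH).mp hρu
      have hv : v ∈ goodG := by
        by_contra hvb
        exact P2 v (fun hc => hvb ((hmemD_G v).mp hc)) ((hmemD_H (ρ v)).mpr hρv)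
      have eu := hcoord u hu
      have ev := hcoord v hv
      simp only [hfG, hfH, Prod.mk.injEq] at eu ev
      obtain ⟨ecu, eiu, epu⟩ := eu
      obtain ⟨ecv, eiv, epv⟩ := ev
      have hcomp : G.connectedComponentMk u = G.connectedComponentMk v := by
        apply idxC_inj G hKG
        · exact ecu.symm.trans ((congrArg (clsC H hKH) hcompH).trans ecv)
        · exact eiu.symm.trans ((congrArg (idxC H hKH) hcompH).trans eiv)
      rw [adjV H hKH hcompH] at hadj
      rw [adjV G hKG hcomp]
      rw [show clsV H hKH (ρ u) = clsV G hKG u from ecu,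
        show posV H hKH (ρ u) = posV G hKG u from epu,
        show posV H hKH (ρ v) = posV G hKG v from epv] at hadj
      exact hadj
  -- the symmetric-difference graph
  set G' : SimpleGraph V := H.comap ρ with hG'
  set Gs : SimpleGraph V := symmDiff G' G with hGs
  have hG'adj : ∀ u v : V, G'.Adj u v ↔ H.Adj (ρ u) (ρ v) := fun u v => Iff.rfl
  have hGsadj : ∀ u v : V, Gs.Adj u v ↔
      ((G'.Adj u v ∧ ¬ G.Adj u v) ∨ (G.Adj u v ∧ ¬ G'.Adj u v)) := by
    intro u v
    rw [hGs, symmDiff_def]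
    simp only [sup_adj, sdiff_adj]
  have hedge : symmDiff {e : Sym2 V | e.map ρ ∈ H.edgeSet} G.edgeSet = Gs.edgeSet := by
    have h1 : {e : Sym2 V | e.map ρ ∈ H.edgeSet} = G'.edgeSet := by
      ext e
      refine Sym2.ind (fun x y => ?_) e
      simp only [Set.mem_setOf_eq, Sym2.map_pair_eq, mem_edgeSet]
      exact (hG'adj x y).symm
    rw [h1, hGs, symmDiff_def, symmDiff_def, edgeSet_sup, edgeSet_sdiff, edgeSet_sdiff]
    rfl
  have hdegH' : ∀ w : W, H.degree w ≤ d := by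
    intro w
    rw [← card_neighborSet_eq_degree, ← Nat.card_eq_fintype_card, Nat.card_coe_set_eq]
    exact hdH w
  have hdegG : ∀ u : V, G.degree u ≤ d := by
    intro u
    rw [← card_neighborSet_eq_degree, ← Nat.card_eq_fintype_card, Nat.card_coe_set_eq]
    exact hdG u
  have hdegG' : ∀ u : V, G'.degree u ≤ d := by
    intro u
    refine le_trans ?_ (hdegH' (ρ u))
    apply Finset.card_le_card_of_injOn ρ
    · intro v hv
      rw [Finset.mem_coe, mem_neighborFinset] at hv ⊢
      exact (hG'adj u v).mp hv
    · exact fun a _ b _ h2 => ρ.injective h2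
  have hdeg0 : ∀ u ∈ goodG, Gs.degree u = 0 := by
    intro u hu
    rw [degree, Finset.card_eq_zero]
    ext v
    simp only [mem_neighborFinset, Finset.notMem_empty, iff_false]
    rw [hGsadj]
    have h2 : G'.Adj u v ↔ G.Adj u v := (hG'adj u v).trans (main_adj u v hu).symm
    tauto
  have hdegGs : ∀ u : V, Gs.degree u ≤ 2 * d := by
    intro u
    have hsub : Gs.neighborFinset u ⊆ G'.neighborFinset u ∪ G.neighborFinset u := by
      intro v hv
      rw [mem_neighborFinset] at hv
      rw [Finset.mem_union, mem_neighborFinset, mem_neighborFinset]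
      rw [hGsadj] at hv
      tauto
    calc Gs.degree u ≤ (G'.neighborFinset u ∪ G.neighborFinset u).card :=
          Finset.card_le_card hsub
      _ ≤ (G'.neighborFinset u).card + (G.neighborFinset u).card := Finset.card_union_le _ _
      _ ≤ d + d := add_le_add (hdegG' u) (hdegG u)
      _ = 2 * d := by ring
  set Bf : Finset V := Finset.univ.filter (fun v => v ∉ goodG) with hBf
  have hsumdeg : ∑ u, Gs.degree u ≤ Bf.card * (2 * d) := by
    have h1 : ∑ u, Gs.degree u = ∑ u ∈ Bf, Gs.degree u :=
      (Finset.sum_subset (Finset.subset_univ Bf) (fun x _ hx => by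
        simp only [hBf, Finset.mem_filter, Finset.mem_univ, true_and, not_not] at hx
        exact hdeg0 x hx)).symm
    rw [h1]
    calc ∑ u ∈ Bf, Gs.degree u ≤ ∑ _u ∈ Bf, 2 * d :=
          Finset.sum_le_sum (fun i _ => hdegGs i)
      _ = Bf.card * (2 * d) := by rw [Finset.sum_const, smul_eq_mul]
  have hedgecard : Gs.edgeFinset.card ≤ Bf.card * d := by
    have handshake := Gs.sum_degrees_eq_twice_card_edges
    have h2 : 2 * Gs.edgeFinset.card ≤ 2 * (Bf.card * d) := by
      rw [← handshake]
      calc ∑ u, Gs.degree u ≤ Bf.card * (2 * d) := hsumdeg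
        _ = 2 * (Bf.card * d) := by ring
    omega
  -- class-by-class counting
  have hclassG : ∀ S : Q K, {v : V | clsV G hKG v = S}.ncard = aG S * nS S := by
    intro S
    have hset : {v : V | clsV G hKG v = S}
        = {v : V | clsV G hKG v = S ∧ idxV G hKG v < aG S} := by
      ext v
      simp only [Set.mem_setOf_eq, iff_self_and]
      intro h
      rw [haG, ← h]
      exact idxC_lt G hKG _
    rw [hset, haG, hnS]
    exact card_set G hKG S _ le_rfl
  have hclassH : ∀ S : Q K, {w : W | clsV H hKH w = S}.ncard = aH S * nS S := by
    intro S
    have hset : {w : W | clsV H hKH w = S}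
        = {w : W | clsV H hKH w = S ∧ idxV H hKH w < aH S} := by
      ext w
      simp only [Set.mem_setOf_eq, iff_self_and]
      intro h
      rw [haH, ← h]
      exact idxC_lt H hKH _
    rw [hset, haH, hnS]
    exact card_set H hKH S _ le_rfl
  have hVtot : (Finset.univ : Finset V).card = ∑ S : Q K, aG S * nS S := by
    rw [Finset.card_eq_sum_card_fiberwise
      (f := clsV G hKG) (t := Finset.univ) (fun v _ => Finset.mem_univ _)]
    refine Finset.sum_congr rfl (fun S _ => ?_)
    have h3 : (Finset.univ.filter (fun v => clsV G hKG v = S)).card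
        = {v : V | clsV G hKG v = S}.ncard := by
      rw [← Set.ncard_coe_finset]
      congr 1
      ext v
      simp
    rw [h3, hclassG S]
  have hWtot : (Finset.univ : Finset W).card = ∑ S : Q K, aH S * nS S := by
    rw [Finset.card_eq_sum_card_fiberwise
      (f := clsV H hKH) (t := Finset.univ) (fun v _ => Finset.mem_univ _)]
    refine Finset.sum_congr rfl (fun S _ => ?_)
    have h3 : (Finset.univ.filter (fun w => clsV H hKH w = S)).card
        = {w : W | clsV H hKH w = S}.ncard := by
      rw [← Set.ncard_coe_finset]
      congr 1
      ext w
      simp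
    rw [h3, hclassH S]
  have hgoodGcount : (Finset.univ.filter (fun v : V => v ∈ goodG)).card
      = ∑ S : Q K, min (aG S) (aH S) * nS S := by
    rw [Finset.card_eq_sum_card_fiberwise
      (f := clsV G hKG) (t := Finset.univ) (fun v _ => Finset.mem_univ _)]
    refine Finset.sum_congr rfl (fun S _ => ?_)
    rw [Finset.filter_filter]
    have h2 : (Finset.univ.filter (fun v => v ∈ goodG ∧ clsV G hKG v = S)).card
        = {v : V | clsV G hKG v = S ∧ idxV G hKG v < min (aG S) (aH S)}.ncard := by
      rw [← Set.ncard_coe_finset]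
      congr 1
      ext v
      simp only [Finset.coe_filter, Finset.mem_univ, true_and, Set.mem_setOf_eq, hgoodG,
        lt_min_iff]
      constructor
      · rintro ⟨hg, hc⟩
        refine ⟨hc, ?_, ?_⟩
        · rw [haG, ← hc]; exact idxC_lt G hKG _
        · rwa [hc] at hg
      · rintro ⟨hc, _hlt1, hlt2⟩
        exact ⟨by rw [hc]; exact hlt2, hc⟩
    rw [h2, hnS]
    exact card_set G hKG S _ (haG ▸ min_le_left _ _)
  have hgoodHcount : (Finset.univ.filter (fun w : W => w ∈ goodH)).card
      = ∑ S : Q K, min (aG S) (aH S) * nS S := by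
    rw [Finset.card_eq_sum_card_fiberwise
      (f := clsV H hKH) (t := Finset.univ) (fun w _ => Finset.mem_univ _)]
    refine Finset.sum_congr rfl (fun S _ => ?_)
    rw [Finset.filter_filter]
    have h2 : (Finset.univ.filter (fun w => w ∈ goodH ∧ clsV H hKH w = S)).card
        = {w : W | clsV H hKH w = S ∧ idxV H hKH w < min (aG S) (aH S)}.ncard := by
      rw [← Set.ncard_coe_finset]
      congr 1
      ext w
      simp only [Finset.coe_filter, Finset.mem_univ, true_and, Set.mem_setOf_eq, hgoodH,
        lt_min_iff]
      constructor
      · rintro ⟨hg, hc⟩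
        refine ⟨hc, ?_, ?_⟩
        · rwa [hc] at hg
        · rw [haH, ← hc]; exact idxC_lt H hKH _
      · rintro ⟨hc, hlt1, _hlt2⟩
        exact ⟨by rw [hc]; exact hlt1, hc⟩
    rw [h2, hnS]
    exact card_set H hKH S _ (haH ▸ min_le_right _ _)
  -- translate the hypothesis
  have hcnt1 : ∀ S : Q K,
      {v : V | ∃ p : ConnRep K, Quot.mk (rel K) p = S ∧ compClass G v p}.ncard
        = aG S * nS S := fun S => by rw [cls_set G hKG S, hclassG S]
  have hcnt2 : ∀ S : Q K,
      {w : W | ∃ p : ConnRep K, Quot.mk (rel K) p = S ∧ compClass H w p}.ncard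
        = aH S * nS S := fun S => by rw [cls_set H hKH S, hclassH S]
  simp only [hcnt1, hcnt2] at hκ
  rw [finsum_eq_sum_of_fintype] at hκ
  have hnR : (0 : ℝ) < n := by exact_mod_cast hnpos
  have hsum2 : ∑ S : Q K, |((aG S * nS S : ℕ) : ℝ) - ((aH S * nS S : ℕ) : ℝ)| < κ * n := by
    calc ∑ S : Q K, |((aG S * nS S : ℕ) : ℝ) - ((aH S * nS S : ℕ) : ℝ)|
        = ∑ S : Q K, (n : ℝ) * |((aG S * nS S : ℕ) : ℝ) / n - ((aH S * nS S : ℕ) : ℝ) / n| := by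
          refine Finset.sum_congr rfl (fun S _ => ?_)
          rw [div_sub_div_same, abs_div, abs_of_pos hnR, mul_div_cancel₀ _ (ne_of_gt hnR)]
      _ = (n : ℝ) * ∑ S : Q K, |((aG S * nS S : ℕ) : ℝ) / n - ((aH S * nS S : ℕ) : ℝ) / n| := by
          rw [Finset.mul_sum]
      _ < (n : ℝ) * κ := by exact (mul_lt_mul_iff_right₀ hnR).mpr hκ
      _ = κ * n := mul_comm _ _
  -- 2 * |bad| = sum of per-class discrepancies
  have s1 : ∑ S : Q K, ((aG S * nS S : ℕ) : ℝ) = (n : ℝ) := by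
    rw [← Nat.cast_sum, ← hVtot, Finset.card_univ, hn]
  have s2 : ∑ S : Q K, ((aH S * nS S : ℕ) : ℝ) = (n : ℝ) := by
    rw [← Nat.cast_sum, ← hWtot, Finset.card_univ, hn']
  have hsplitG : (Finset.univ.filter (fun v : V => v ∈ goodG)).card + Bf.card
      = Fintype.card V := by
    rw [hBf, ← Finset.card_univ]
    exact Finset.card_filter_add_card_filter_not (fun v => v ∈ goodG)
  have e1 : (Bf.card : ℝ) = (n : ℝ) - ∑ S : Q K, ((min (aG S) (aH S) * nS S : ℕ) : ℝ) := by
    have := congrArg (fun x : ℕ => (x : ℝ)) hsplitG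
    simp only [Nat.cast_add] at this
    rw [hgoodGcount, hn] at this
    rw [← Nat.cast_sum]
    linarith [this]
  have hBfR : 2 * (Bf.card : ℝ) = ∑ S : Q K,
      (((aG S * nS S : ℕ) : ℝ) + ((aH S * nS S : ℕ) : ℝ)
        - 2 * ((min (aG S) (aH S) * nS S : ℕ) : ℝ)) := by
    rw [Finset.sum_sub_distrib, Finset.sum_add_distrib, s1, s2, ← Finset.mul_sum, e1]
    ring
  have hterm : ∀ S : Q K,
      (((aG S * nS S : ℕ) : ℝ) + ((aH S * nS S : ℕ) : ℝ)
        - 2 * ((min (aG S) (aH S) * nS S : ℕ) : ℝ))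
      = |((aG S * nS S : ℕ) : ℝ) - ((aH S * nS S : ℕ) : ℝ)| := by
    intro S
    rcases le_total (aG S) (aH S) with h | h
    · rw [min_eq_left h, abs_of_nonpos]
      · ring
      · have : (aG S : ℝ) ≤ (aH S : ℝ) := by exact_mod_cast h
        push_cast
        nlinarith [Nat.cast_nonneg (α := ℝ) (nS S)]
    · rw [min_eq_right h, abs_of_nonneg]
      · ring
      · have : (aH S : ℝ) ≤ (aG S : ℝ) := by exact_mod_cast h
        push_cast
        nlinarith [Nat.cast_nonneg (α := ℝ) (nS S)]
  have hkey : 2 * (Bf.card : ℝ) < κ * n := by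
    rw [hBfR, Finset.sum_congr rfl (fun S _ => hterm S)]
    exact hsum2
  -- final assembly
  rw [hedge]
  have hLHS : Gs.edgeSet.ncard = Gs.edgeFinset.card := by
    rw [edgeFinset_card, ← Nat.card_coe_set_eq, Nat.card_eq_fintype_card]
  rw [hLHS]
  have hE : (Gs.edgeFinset.card : ℝ) ≤ (Bf.card : ℝ) * d := by
    exact_mod_cast hedgecard
  have hd0 : (0 : ℝ) ≤ (d : ℝ) := Nat.cast_nonneg d
  nlinarith [hE, hkey, mul_le_mul_of_nonneg_right hkey.le hd0,
    mul_nonneg (mul_nonneg hκpos.le hnR.le) hd0]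
end

section
/- Let ε > 0 and κ > 0 satisfy 2εd + κd < δ. Let G, H be finite graphs with degree bound d and |V(G)| = |V(H)| = n. Suppose there exist spanning subgraphs G' ⊆ G and H' ⊆ H all of whose components have size at most K such that |E(G)∖E(G')| ≤ ε d n, |E(H)∖E(H')| ≤ ε d n, and Σ_S |c^{G'}_S − c^{H'}_S| < κ. Then there exists a bijection ρ : V(G) → V(H) with |ρ^{-1}(E(H)) △ E(G)| ≤ δ n. -/
namespace Stmt14

open SimpleGraph
open scoped Classical
set_option linter.unusedSectionVars false
set_option maxHeartbeats 1600000

abbrev Classes (K : ℕ) := Quot (fun p q : ConnRep K => Nonempty (p.graph ≃g q.graph))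

lemma rel_equiv (K : ℕ) : Equivalence (fun p q : ConnRep K => Nonempty (p.graph ≃g q.graph)) :=
  ⟨fun _ => ⟨Iso.refl⟩, fun ⟨e⟩ => ⟨e.symm⟩, fun ⟨e⟩ ⟨f⟩ => ⟨e.trans f⟩⟩

lemma mk_eq_mk {K : ℕ} {p q : ConnRep K} :
    (Quot.mk _ p : Classes K) = Quot.mk _ q ↔ Nonempty (p.graph ≃g q.graph) := by
  rw [Quot.eq, Equivalence.eqvGen_iff (rel_equiv K)]

instance finGraph (K : ℕ) : Finite (ConnRep K) := by
  have : Function.Injective (fun p : ConnRep K => (⟨⟨p.n, Nat.lt_succ_of_le p.hn⟩, p.graph⟩ :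
      Σ n : Fin (K+1), SimpleGraph (Fin n))) := by
    rintro ⟨n1, h1, g1, c1⟩ ⟨n2, h2, g2, c2⟩ h
    rw [Sigma.mk.inj_iff] at h
    simp only [Fin.mk.injEq] at h
    obtain ⟨rfl, h2⟩ := h
    obtain rfl := eq_of_heq h2
    rfl
  exact Finite.of_injective _ this

instance finClasses (K : ℕ) : Finite (Classes K) := Finite.of_surjective _ (Quot.exists_rep)

lemma card_fin_ge (a b : ℕ) : Nat.card {i : Fin a // b ≤ i.val} = a - b := by
  have e : {i : Fin a // b ≤ i.val} ≃ Fin (a - b) :=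
    { toFun := fun x => ⟨x.val.val - b, by omega⟩
      invFun := fun k => ⟨⟨b + k.val, by omega⟩, by simp⟩
      left_inv := fun x => by
        apply Subtype.ext; apply Fin.ext
        have := x.prop; simp; omega
      right_inv := fun k => by apply Fin.ext; simp }
  rw [Nat.card_congr e]; simp

lemma card_fin_true (a : ℕ) (P : ℕ → Prop) (hP : ∀ i, P i) :
    Nat.card {i : Fin a // P i.val} = a := by
  have := Nat.card_congr (Equiv.subtypeUnivEquiv (fun i : Fin a => hP i.val))
  simpa using this

lemma card_touch {α : Type*} [Fintype α] (X : SimpleGraph α) (d : ℕ)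
    (hd : ∀ v, (X.neighborSet v).ncard ≤ d) (B : Set α) :
    {e ∈ X.edgeSet | ∃ v ∈ B, v ∈ e}.ncard ≤ d * B.ncard := by
  classical
  have hsub : {e ∈ X.edgeSet | ∃ v ∈ B, v ∈ e}.toFinset ⊆
      B.toFinset.biUnion (fun v => (X.incidenceSet v).toFinset) := by
    intro e he
    simp only [Set.mem_toFinset, Set.mem_setOf_eq] at he
    obtain ⟨he1, v, hv, hve⟩ := he
    simp only [Finset.mem_biUnion, Set.mem_toFinset]
    exact ⟨v, hv, he1, hve⟩
  calc {e ∈ X.edgeSet | ∃ v ∈ B, v ∈ e}.ncard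
      = {e ∈ X.edgeSet | ∃ v ∈ B, v ∈ e}.toFinset.card := Set.ncard_eq_toFinset_card' _
    _ ≤ (B.toFinset.biUnion (fun v => (X.incidenceSet v).toFinset)).card :=
        Finset.card_le_card hsub
    _ ≤ ∑ v ∈ B.toFinset, (X.incidenceSet v).toFinset.card := Finset.card_biUnion_le
    _ ≤ ∑ _v ∈ B.toFinset, d := by
        apply Finset.sum_le_sum
        intro v _
        rw [← Set.ncard_eq_toFinset_card']
        calc (X.incidenceSet v).ncard = (X.neighborSet v).ncard := by
              rw [← Nat.card_coe_set_eq, ← Nat.card_coe_set_eq]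
              exact Nat.card_congr (X.incidenceSetEquivNeighborSet v)
          _ ≤ d := hd v
    _ = B.toFinset.card * d := by rw [Finset.sum_const, smul_eq_mul]
    _ = d * B.ncard := by rw [← Set.ncard_eq_toFinset_card', Nat.mul_comm]

lemma sym2_preimage_card {V W : Type*} [Fintype V] [Fintype W] (ρ : V ≃ W) (s : Set (Sym2 W)) :
    {e : Sym2 V | e.map ρ ∈ s}.ncard = s.ncard := by
  rw [← Nat.card_coe_set_eq, ← Nat.card_coe_set_eq]
  apply Nat.card_congr
  refine Equiv.ofBijective (fun x => ⟨x.val.map ρ, x.prop⟩) ⟨?_, ?_⟩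
  · rintro ⟨e, he⟩ ⟨f, hf⟩ h
    exact Subtype.ext (Sym2.map.injective ρ.injective (congrArg Subtype.val h))
  · rintro ⟨f, hf⟩
    refine ⟨⟨f.map ρ.symm, ?_⟩, ?_⟩
    · show (f.map ρ.symm).map ρ ∈ s
      rw [Sym2.map_map]
      simpa using hf
    · apply Subtype.ext
      show (f.map ρ.symm).map ρ = f
      rw [Sym2.map_map]
      simp

/-- transfer adjacency along an equality of `ConnRep`s -/
lemma adj_transfer {K : ℕ} {p q : ConnRep K} (h : p = q) (a b : Fin p.n)
    (hadj : p.graph.Adj a b) :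
    ∃ a' b' : Fin q.n, (a' : ℕ) = a ∧ (b' : ℕ) = b ∧ q.graph.Adj a' b' := by
  subst h; exact ⟨a, b, rfl, rfl, hadj⟩

section PerGraph

variable {V : Type*} [Fintype V] (G' : SimpleGraph V) (K : ℕ)
  (hK : ∀ v, {w | G'.Reachable v w}.ncard ≤ K)

lemma comp_connected (v : V) : (G'.induce {w | G'.Reachable v w}).Connected := by
  apply induce_connected_of_patches v (by exact Reachable.refl v)
  intro w hw
  obtain ⟨p⟩ := (hw : G'.Reachable v w)
  refine ⟨{x | x ∈ p.support}, ?_, p.start_mem_support, p.end_mem_support, ?_⟩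
  · intro x hx
    exact ⟨p.takeUntil x hx⟩
  · exact (p.connected_induce_support).preconnected _ _

noncomputable def mSize (v : V) : ℕ := Nat.card {w | G'.Reachable v w}

noncomputable def compEquiv (v : V) : {w | G'.Reachable v w} ≃ Fin (mSize G' v) := by
  letI := Fintype.ofFinite {w | G'.Reachable v w}
  exact Fintype.equivFinOfCardEq (by simp only [mSize, Nat.card_eq_fintype_card])

noncomputable def toRep (v : V) : ConnRep K where
  n := mSize G' v
  hn := by rw [mSize, Nat.card_coe_set_eq]; exact hK v
  graph := (G'.induce {w | G'.Reachable v w}).comap ⇑(compEquiv G' v).symm.toEmbedding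
  conn := by
    exact (Iso.comap (compEquiv G' v).symm (G'.induce _)).connected_iff.mpr
      (comp_connected G' v)

noncomputable def repIso (v : V) :
    (G'.induce {w | G'.Reachable v w}) ≃g (toRep G' K hK v).graph :=
  (Iso.comap (compEquiv G' v).symm (G'.induce _)).symm

noncomputable def cls (v : V) : Classes K := Quot.mk _ (toRep G' K hK v)

lemma compClass_iff (v : V) (p : ConnRep K) :
    compClass G' v p ↔ Quot.mk _ p = cls G' K hK v := by
  constructor
  · rintro ⟨e⟩
    exact mk_eq_mk.mpr ⟨e.symm.trans (repIso G' K hK v)⟩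
  · intro h
    obtain ⟨e⟩ := mk_eq_mk.mp h
    exact ⟨(repIso G' K hK v).trans e.symm⟩

lemma cls_eq_of_reachable {u v : V} (h : G'.Reachable u v) :
    cls G' K hK u = cls G' K hK v := by
  have hset : {w | G'.Reachable u w} = {w | G'.Reachable v w} := by
    ext x; exact ⟨fun hx => h.symm.trans hx, fun hx => h.trans hx⟩
  have : compClass G' v (toRep G' K hK u) := ⟨by rw [← hset]; exact repIso G' K hK u⟩
  exact (compClass_iff G' K hK v _).mp this

lemma setA_eq (S : Classes K) :
    {v : V | ∃ p : ConnRep K, Quot.mk _ p = S ∧ compClass G' v p}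
      = {v : V | cls G' K hK v = S} := by
  ext v
  simp only [Set.mem_setOf_eq]
  constructor
  · rintro ⟨p, rfl, hp⟩
    exact ((compClass_iff G' K hK v p).mp hp).symm
  · rintro rfl
    exact ⟨toRep G' K hK v, rfl, ⟨repIso G' K hK v⟩⟩

local notation "mkc" => G'.connectedComponentMk

lemma mk_out_eq (c : G'.ConnectedComponent) : mkc c.out = c := c.out_eq

lemma reachable_out (v : V) : G'.Reachable (mkc v).out v :=
  ConnectedComponent.eq.mp (mk_out_eq G' (mkc v))

noncomputable def ccls (c : G'.ConnectedComponent) : Classes K := cls G' K hK c.out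

lemma cls_eq_ccls (v : V) : cls G' K hK v = ccls G' K hK (mkc v) :=
  (cls_eq_of_reachable G' K hK (reachable_out G' v)).symm

noncomputable def phi (c : G'.ConnectedComponent) :
    (G'.induce {w | G'.Reachable c.out w}) ≃g ((ccls G' K hK c).out.graph) :=
  Classical.choice ((compClass_iff G' K hK c.out _).mpr (Quot.out_eq _))

noncomputable def pos (v : V) : ℕ :=
  ((phi G' K hK (mkc v)) ⟨v, reachable_out G' v⟩ : Fin _).val

lemma pos_spec (c : G'.ConnectedComponent) (v : V) (h : mkc v = c) (hv : G'.Reachable c.out v) :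
    pos G' K hK v = ((phi G' K hK c) ⟨v, hv⟩).val := by
  subst h; rfl

lemma pos_lt (v : V) : pos G' K hK v < (ccls G' K hK (mkc v)).out.n := Fin.is_lt _

lemma pos_inj {u v : V} (h : mkc u = mkc v) (hp : pos G' K hK u = pos G' K hK v) : u = v := by
  rw [pos_spec G' K hK (mkc u) u rfl (reachable_out G' u),
      pos_spec G' K hK (mkc u) v h.symm (h ▸ reachable_out G' v)] at hp
  have := (phi G' K hK (mkc u)).toEquiv.injective (Fin.val_injective hp)
  exact congrArg Subtype.val this

lemma pos_surj (c : G'.ConnectedComponent) (j : ℕ) (hj : j < (ccls G' K hK c).out.n) :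
    ∃ v : V, mkc v = c ∧ pos G' K hK v = j := by
  set x : {w | G'.Reachable c.out w} := (phi G' K hK c).toEquiv.symm ⟨j, hj⟩ with hx
  have hc : mkc x.val = c :=
    ((ConnectedComponent.eq.mpr x.prop).symm).trans (mk_out_eq G' c)
  refine ⟨x.val, hc, ?_⟩
  rw [pos_spec G' K hK c x.val hc x.prop]
  have : (⟨x.val, x.prop⟩ : {w | G'.Reachable c.out w}) = x := rfl
  rw [this, hx]
  exact congrArg Fin.val ((phi G' K hK c).apply_symm_apply ⟨j, hj⟩)

noncomputable def aCnt (S : Classes K) : ℕ :=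
  Nat.card {c : G'.ConnectedComponent // ccls G' K hK c = S}

noncomputable def enum (S : Classes K) :
    {c : G'.ConnectedComponent // ccls G' K hK c = S} ≃ Fin (aCnt G' K hK S) := by
  letI := Fintype.ofFinite {c : G'.ConnectedComponent // ccls G' K hK c = S}
  exact Fintype.equivFinOfCardEq (by simp only [aCnt, Nat.card_eq_fintype_card])

noncomputable def idx (c : G'.ConnectedComponent) : ℕ :=
  (enum G' K hK (ccls G' K hK c) ⟨c, rfl⟩).val

lemma idx_spec (S : Classes K) (c : G'.ConnectedComponent) (h : ccls G' K hK c = S) :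
    idx G' K hK c = (enum G' K hK S ⟨c, h⟩).val := by
  subst h; rfl

lemma idx_lt (c : G'.ConnectedComponent) : idx G' K hK c < aCnt G' K hK (ccls G' K hK c) :=
  Fin.is_lt _

lemma idx_inj {c c' : G'.ConnectedComponent} (h : ccls G' K hK c = ccls G' K hK c')
    (hi : idx G' K hK c = idx G' K hK c') : c = c' := by
  rw [idx_spec G' K hK (ccls G' K hK c) c rfl, idx_spec G' K hK (ccls G' K hK c) c' h.symm] at hi
  have := (enum G' K hK (ccls G' K hK c)).injective (Fin.val_injective hi)
  exact congrArg Subtype.val this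

lemma idx_surj (S : Classes K) (i : ℕ) (hi : i < aCnt G' K hK S) :
    ∃ c : G'.ConnectedComponent, ccls G' K hK c = S ∧ idx G' K hK c = i := by
  set x := (enum G' K hK S).symm ⟨i, hi⟩ with hx
  refine ⟨x.val, x.prop, ?_⟩
  rw [idx_spec G' K hK S x.val x.prop]
  have : (⟨x.val, x.prop⟩ : {c // ccls G' K hK c = S}) = x := rfl
  rw [this, hx]
  exact congrArg Fin.val ((enum G' K hK S).apply_symm_apply ⟨i, hi⟩)

lemma adj_iff_pos (c : G'.ConnectedComponent) (u v : V) (hu : mkc u = c) (hv : mkc v = c) :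
    G'.Adj u v ↔ ∃ a b : Fin (ccls G' K hK c).out.n,
      (a : ℕ) = pos G' K hK u ∧ (b : ℕ) = pos G' K hK v ∧ (ccls G' K hK c).out.graph.Adj a b := by
  subst hu
  have hru : G'.Reachable (mkc u).out u := reachable_out G' u
  have hrv : G'.Reachable (mkc u).out v := hv ▸ reachable_out G' v
  have hpu : pos G' K hK u = ((phi G' K hK (mkc u)) ⟨u, hru⟩).val :=
    pos_spec G' K hK (mkc u) u rfl hru
  have hpv : pos G' K hK v = ((phi G' K hK (mkc u)) ⟨v, hrv⟩).val :=
    pos_spec G' K hK (mkc u) v hv hrv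
  constructor
  · intro hadj
    refine ⟨(phi G' K hK (mkc u)) ⟨u, hru⟩, (phi G' K hK (mkc u)) ⟨v, hrv⟩,
      hpu.symm, hpv.symm, ?_⟩
    exact (phi G' K hK (mkc u)).map_adj_iff.mpr (by simpa using hadj)
  · rintro ⟨a, b, ha, hb, hadj⟩
    have ha' : a = (phi G' K hK (mkc u)) ⟨u, hru⟩ := Fin.val_injective (ha.trans hpu)
    have hb' : b = (phi G' K hK (mkc u)) ⟨v, hrv⟩ := Fin.val_injective (hb.trans hpv)
    subst ha' hb'
    have := (phi G' K hK (mkc u)).map_adj_iff.mp hadj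
    simpa using this

lemma card_classP (S : Classes K) (P : ℕ → Prop) :
    Nat.card {v : V | cls G' K hK v = S ∧ P (idx G' K hK (mkc v))}
      = Nat.card {i : Fin (aCnt G' K hK S) // P i.val} * S.out.n := by
  rw [show S.out.n = Nat.card (Fin S.out.n) from (by simp), ← Nat.card_prod]
  apply Nat.card_congr
  apply Equiv.ofBijective (f := fun x =>
    (⟨enum G' K hK S ⟨mkc x.val, (cls_eq_ccls G' K hK x.val) ▸ x.prop.1⟩, by
        have h1 : ccls G' K hK (mkc x.val) = S := (cls_eq_ccls G' K hK x.val) ▸ x.prop.1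
        have := x.prop.2
        rwa [idx_spec G' K hK S (mkc x.val) h1] at this⟩,
     ⟨pos G' K hK x.val, by
        have h1 : ccls G' K hK (mkc x.val) = S := (cls_eq_ccls G' K hK x.val) ▸ x.prop.1
        have := pos_lt G' K hK x.val
        rwa [h1] at this⟩))
  constructor
  · rintro ⟨u, hu⟩ ⟨v, hv⟩ h
    simp only [Prod.mk.injEq, Subtype.mk.injEq, Fin.mk.injEq] at h
    have hmk : mkc u = mkc v := by
      have := (enum G' K hK S).injective (Fin.val_injective (congrArg Fin.val h.1))
      exact congrArg Subtype.val this
    exact Subtype.ext (pos_inj G' K hK hmk h.2)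
  · rintro ⟨⟨i, hPi⟩, ⟨j, hj⟩⟩
    set c := (enum G' K hK S).symm i with hc
    have hcS : ccls G' K hK c.val = S := c.prop
    obtain ⟨v, hvc, hvpos⟩ := pos_surj G' K hK c.val j (by rw [hcS]; exact hj)
    have hclsv : cls G' K hK v = S := by
      rw [cls_eq_ccls G' K hK v, hvc, hcS]
    have hidxv : idx G' K hK (mkc v) = i.val := by
      rw [hvc, idx_spec G' K hK S c.val hcS]
      have : (⟨c.val, hcS⟩ : {c // ccls G' K hK c = S}) = c := rfl
      rw [this, hc]
      exact congrArg Fin.val ((enum G' K hK S).apply_symm_apply i)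
    refine ⟨⟨v, hclsv, by rw [hidxv]; exact hPi⟩, ?_⟩
    apply Prod.ext
    case snd => exact Fin.ext hvpos
    apply Subtype.ext
    · show (enum G' K hK S ⟨mkc v, _⟩ : Fin _) = i
      have : (⟨mkc v, (cls_eq_ccls G' K hK v) ▸ hclsv⟩ : {c // ccls G' K hK c = S})
          = ⟨c.val, hcS⟩ := Subtype.ext hvc
      rw [this]
      have h2 : (⟨c.val, hcS⟩ : {c // ccls G' K hK c = S}) = c := rfl
      rw [h2, hc]
      exact (enum G' K hK S).apply_symm_apply i

end PerGraph

end Stmt14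
open SimpleGraph Stmt14 in
set_option maxHeartbeats 3200000 in
/-- Let `2εd + κd < δ`, and let `G`, `H` be finite graphs with degree bound
`d` on `n` vertices admitting spanning subgraphs `G' ≤ G`, `H' ≤ H`, all of whose
components have at most `K` vertices, with `|E(G)∖E(G')| ≤ εdn`, `|E(H)∖E(H')| ≤ εdn`
and `Σ_S |c^{G'}_S − c^{H'}_S| < κ`. Then there is a bijection `ρ : V(G) → V(H)` with
`|ρ^{-1}(E(H)) △ E(G)| ≤ δn`. -/
theorem stmt_14 {V W : Type*} [Fintype V] [Fintype W] (G : SimpleGraph V)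
    (H : SimpleGraph W) (G' : SimpleGraph V) (H' : SimpleGraph W)
    (d K n : ℕ) (ε κ δ : ℝ) (hε : 0 < ε) (hκ : 0 < κ)
    (hδ : 2 * ε * d + κ * d < δ)
    (hn : Fintype.card V = n) (hn' : Fintype.card W = n)
    (hdG : ∀ v, (G.neighborSet v).ncard ≤ d) (hdH : ∀ w, (H.neighborSet w).ncard ≤ d)
    (hG' : G' ≤ G) (hH' : H' ≤ H)
    (hKG : ∀ v, {w | G'.Reachable v w}.ncard ≤ K)
    (hKH : ∀ v, {w | H'.Reachable v w}.ncard ≤ K)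
    (hGdel : ((G.edgeSet \ G'.edgeSet).ncard : ℝ) ≤ ε * d * n)
    (hHdel : ((H.edgeSet \ H'.edgeSet).ncard : ℝ) ≤ ε * d * n)
    (hsum : ∑ᶠ S : Quot (fun p q : ConnRep K => Nonempty (p.graph ≃g q.graph)),
      |({v : V | ∃ p : ConnRep K, Quot.mk _ p = S ∧ compClass G' v p}.ncard : ℝ) / n -
        ({w : W | ∃ p : ConnRep K, Quot.mk _ p = S ∧ compClass H' w p}.ncard : ℝ) / n|
      < κ) :
    ∃ ρ : V ≃ W,
      ((symmDiff {e : Sym2 V | e.map ρ ∈ H.edgeSet} G.edgeSet).ncard : ℝ) ≤ δ * n := by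
  classical
  obtain hn0 | hnpos := Nat.eq_zero_or_pos n
  · -- degenerate case `n = 0`
    subst hn0
    haveI : IsEmpty V := Fintype.card_eq_zero_iff.mp hn
    haveI : IsEmpty W := Fintype.card_eq_zero_iff.mp hn'
    refine ⟨Equiv.equivOfIsEmpty V W, ?_⟩
    haveI : IsEmpty (Sym2 V) := ⟨fun e => Sym2.ind (fun a _ => isEmptyElim a) e trivial⟩
    rw [Set.eq_empty_of_isEmpty (symmDiff _ _)]
    simp
  -- main case
  set ψG : V → Classes K × ℕ × ℕ :=
    fun v => (cls G' K hKG v, idx G' K hKG (G'.connectedComponentMk v), pos G' K hKG v) with hψG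
  set ψH : W → Classes K × ℕ × ℕ :=
    fun w => (cls H' K hKH w, idx H' K hKH (H'.connectedComponentMk w), pos H' K hKH w) with hψH
  have hψGinj : Function.Injective ψG := by
    intro u v h
    simp only [hψG, Prod.mk.injEq] at h
    obtain ⟨h1, h2, h3⟩ := h
    have hcc : ccls G' K hKG (G'.connectedComponentMk u) = ccls G' K hKG (G'.connectedComponentMk v) := by
      rw [← cls_eq_ccls, ← cls_eq_ccls]; exact h1
    exact pos_inj G' K hKG (idx_inj G' K hKG hcc h2) h3
  have hψHinj : Function.Injective ψH := by
    intro u v h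
    simp only [hψH, Prod.mk.injEq] at h
    obtain ⟨h1, h2, h3⟩ := h
    have hcc : ccls H' K hKH (H'.connectedComponentMk u) = ccls H' K hKH (H'.connectedComponentMk v) := by
      rw [← cls_eq_ccls, ← cls_eq_ccls]; exact h1
    exact pos_inj H' K hKH (idx_inj H' K hKH hcc h2) h3
  set MG : Set V := {v | ∃ w : W, ψH w = ψG v} with hMG
  set MH : Set W := {w | ∃ v : V, ψG v = ψH w} with hMH
  -- characterization of matched vertices
  have hMGchar : ∀ v : V, v ∈ MG ↔
      idx G' K hKG (G'.connectedComponentMk v) < aCnt H' K hKH (cls G' K hKG v) := by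
    intro v
    constructor
    · rintro ⟨w, hw⟩
      simp only [hψH, hψG, Prod.mk.injEq] at hw
      obtain ⟨h1, h2, h3⟩ := hw
      rw [← h2, ← h1]
      have := idx_lt H' K hKH (H'.connectedComponentMk w)
      rwa [← cls_eq_ccls] at this
    · intro hlt
      obtain ⟨c', hc'S, hc'i⟩ := idx_surj H' K hKH (cls G' K hKG v) _ hlt
      have hposlt : pos G' K hKG v < (cls G' K hKG v).out.n := by
        have := pos_lt G' K hKG v; rwa [← cls_eq_ccls] at this
      obtain ⟨w, hwc, hwpos⟩ := pos_surj H' K hKH c' (pos G' K hKG v) (by rw [hc'S]; exact hposlt)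
      refine ⟨w, ?_⟩
      simp only [hψH, hψG, Prod.mk.injEq]
      exact ⟨by rw [cls_eq_ccls H' K hKH w, hwc, hc'S], by rw [hwc, hc'i], hwpos⟩
  have hMHchar : ∀ w : W, w ∈ MH ↔
      idx H' K hKH (H'.connectedComponentMk w) < aCnt G' K hKG (cls H' K hKH w) := by
    intro w
    constructor
    · rintro ⟨v, hv⟩
      simp only [hψH, hψG, Prod.mk.injEq] at hv
      obtain ⟨h1, h2, h3⟩ := hv
      have h4 := idx_lt G' K hKG (G'.connectedComponentMk v)
      rw [← cls_eq_ccls] at h4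
      rwa [h1, h2] at h4
    · intro hlt
      obtain ⟨c', hc'S, hc'i⟩ := idx_surj G' K hKG (cls H' K hKH w) _ hlt
      have hposlt : pos H' K hKH w < (cls H' K hKH w).out.n := by
        have := pos_lt H' K hKH w; rwa [← cls_eq_ccls] at this
      obtain ⟨v, hvc, hvpos⟩ := pos_surj G' K hKG c' (pos H' K hKH w) (by rw [hc'S]; exact hposlt)
      refine ⟨v, ?_⟩
      simp only [hψH, hψG, Prod.mk.injEq]
      exact ⟨by rw [cls_eq_ccls G' K hKG v, hvc, hc'S], by rw [hvc, hc'i], hvpos⟩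
  -- the matching bijection on matched vertices
  have hfmem : ∀ x : MG, Classical.choose x.prop ∈ MH := by
    intro x
    exact ⟨x.val, (Classical.choose_spec x.prop).symm⟩
  set f : MG → MH := fun x => ⟨Classical.choose x.prop, hfmem x⟩ with hf
  have hfspec : ∀ x : MG, ψH (f x).val = ψG x.val := fun x => Classical.choose_spec x.prop
  have hfbij : Function.Bijective f := by
    constructor
    · intro x y hxy
      apply Subtype.ext
      apply hψGinj
      rw [← hfspec x, ← hfspec y, hxy]
    · rintro ⟨w, hw⟩
      have hvMG : Classical.choose hw ∈ MG := ⟨w, (Classical.choose_spec hw).symm⟩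
      refine ⟨⟨Classical.choose hw, hvMG⟩, ?_⟩
      apply Subtype.ext
      apply hψHinj
      show ψH _ = ψH w
      rw [hfspec ⟨Classical.choose hw, hvMG⟩]
      exact Classical.choose_spec hw
  set eM : MG ≃ MH := Equiv.ofBijective f hfbij with heM
  have heMspec : ∀ x : MG, ψH (eM x).val = ψG x.val := hfspec
  have hcardM : Fintype.card MG = Fintype.card MH := Fintype.card_congr eM
  have hcardC : Fintype.card ↥(MGᶜ) = Fintype.card ↥(MHᶜ) := by
    rw [Fintype.card_compl_set, Fintype.card_compl_set, hcardM, hn, hn']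
  set eC : ↥(MGᶜ) ≃ ↥(MHᶜ) := Fintype.equivOfCardEq hcardC with heC
  set ρ : V ≃ W :=
    (Equiv.Set.sumCompl MG).symm.trans ((eM.sumCongr eC).trans (Equiv.Set.sumCompl MH)) with hρ
  have hρmem : ∀ v (h : v ∈ MG), ρ v = (eM ⟨v, h⟩).val := by
    intro v h
    rw [hρ]
    simp only [Equiv.trans_apply, Equiv.Set.sumCompl_symm_apply_of_mem h,
      Equiv.sumCongr_apply, Sum.map_inl, Equiv.Set.sumCompl_apply_inl]
  have hρMH : ∀ v, v ∈ MG → ρ v ∈ MH := by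
    intro v h; rw [hρmem v h]; exact (eM ⟨v, h⟩).prop
  have hρnot : ∀ v, v ∉ MG → ρ v ∉ MH := by
    intro v h
    rw [hρ]
    simp only [Equiv.trans_apply, Equiv.Set.sumCompl_symm_apply_of_notMem h,
      Equiv.sumCongr_apply, Sum.map_inr, Equiv.Set.sumCompl_apply_inr]
    exact (eC ⟨v, h⟩).prop
  have hψρ : ∀ v (h : v ∈ MG), ψH (ρ v) = ψG v := by
    intro v h
    rw [hρmem v h]
    exact heMspec ⟨v, h⟩
  -- edge transfer on matched vertices
  have hEdge : ∀ u v : V, u ∈ MG → v ∈ MG → (G'.Adj u v ↔ H'.Adj (ρ u) (ρ v)) := by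
    intro u v hu hv
    have h1 := hψρ u hu
    have h2 := hψρ v hv
    simp only [hψH, hψG, Prod.mk.injEq] at h1 h2
    obtain ⟨h1c, h1i, h1p⟩ := h1
    obtain ⟨h2c, h2i, h2p⟩ := h2
    constructor
    · intro hadj
      have hmk : G'.connectedComponentMk u = G'.connectedComponentMk v :=
        ConnectedComponent.eq.mpr hadj.reachable
      have htuv : cls G' K hKG u = cls G' K hKG v := by
        rw [cls_eq_ccls G' K hKG u, cls_eq_ccls G' K hKG v, hmk]
      have hccH : ccls H' K hKH (H'.connectedComponentMk (ρ u))
          = ccls H' K hKH (H'.connectedComponentMk (ρ v)) := by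
        rw [← cls_eq_ccls, ← cls_eq_ccls, h1c, h2c]; exact htuv
      have hidxH : idx H' K hKH (H'.connectedComponentMk (ρ u))
          = idx H' K hKH (H'.connectedComponentMk (ρ v)) := by
        rw [h1i, h2i, hmk]
      have hmkH : H'.connectedComponentMk (ρ u) = H'.connectedComponentMk (ρ v) :=
        idx_inj H' K hKH hccH hidxH
      obtain ⟨a, b, ha, hb, hab⟩ :=
        (adj_iff_pos G' K hKG (G'.connectedComponentMk u) u v rfl hmk.symm).mp hadj
      have hrep : (ccls G' K hKG (G'.connectedComponentMk u)).out
          = (ccls H' K hKH (H'.connectedComponentMk (ρ u))).out := by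
        congr 1
        rw [← cls_eq_ccls, ← cls_eq_ccls, h1c]
      obtain ⟨a', b', ha', hb', hab'⟩ := adj_transfer hrep a b hab
      apply (adj_iff_pos H' K hKH (H'.connectedComponentMk (ρ u)) (ρ u) (ρ v) rfl hmkH.symm).mpr
      exact ⟨a', b', by rw [ha', ha, ← h1p], by rw [hb', hb, ← h2p], hab'⟩
    · intro hadj
      have hmkH : H'.connectedComponentMk (ρ u) = H'.connectedComponentMk (ρ v) :=
        ConnectedComponent.eq.mpr hadj.reachable
      have hccG : ccls G' K hKG (G'.connectedComponentMk u)
          = ccls G' K hKG (G'.connectedComponentMk v) := by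
        rw [← cls_eq_ccls, ← cls_eq_ccls, ← h1c, ← h2c,
          cls_eq_ccls H' K hKH (ρ u), cls_eq_ccls H' K hKH (ρ v), hmkH]
      have hidxG : idx G' K hKG (G'.connectedComponentMk u)
          = idx G' K hKG (G'.connectedComponentMk v) := by
        rw [← h1i, ← h2i, hmkH]
      have hmk : G'.connectedComponentMk u = G'.connectedComponentMk v :=
        idx_inj G' K hKG hccG hidxG
      obtain ⟨a, b, ha, hb, hab⟩ :=
        (adj_iff_pos H' K hKH (H'.connectedComponentMk (ρ u)) (ρ u) (ρ v) rfl hmkH.symm).mp hadj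
      have hrep : (ccls H' K hKH (H'.connectedComponentMk (ρ u))).out
          = (ccls G' K hKG (G'.connectedComponentMk u)).out := by
        congr 1
        rw [← cls_eq_ccls, ← cls_eq_ccls, h1c]
      obtain ⟨a', b', ha', hb', hab'⟩ := adj_transfer hrep a b hab
      apply (adj_iff_pos G' K hKG (G'.connectedComponentMk u) u v rfl hmk.symm).mpr
      exact ⟨a', b', by rw [ha', ha, h1p], by rw [hb', hb, h2p], hab'⟩
  -- decomposition of the symmetric difference
  set D1 : Set (Sym2 V) := G.edgeSet \ G'.edgeSet with hD1
  set D2 : Set (Sym2 V) := {e : Sym2 V | e.map ρ ∈ H.edgeSet \ H'.edgeSet} with hD2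
  set T1 : Set (Sym2 V) := {e ∈ G'.edgeSet | ∃ v ∈ MGᶜ, v ∈ e} with hT1
  set T2 : Set (Sym2 V) := {e : Sym2 V | e.map ρ ∈ H'.edgeSet ∧ ∃ v ∈ MGᶜ, v ∈ e} with hT2
  have hsubset : symmDiff {e : Sym2 V | e.map ρ ∈ H.edgeSet} G.edgeSet
      ⊆ D1 ∪ D2 ∪ T1 ∪ T2 := by
    intro e he
    rw [Set.mem_symmDiff] at he
    induction e with
    | _ u v =>
      rcases he with ⟨heH, heG⟩ | ⟨heG, heH⟩
      · -- `e` maps into `H` but is not an edge of `G`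
        simp only [Set.mem_setOf_eq, Sym2.map_pair_eq, mem_edgeSet] at heH heG
        by_cases hH'e : H'.Adj (ρ u) (ρ v)
        · by_cases hu : u ∈ MG
          · by_cases hv : v ∈ MG
            · exact absurd (hG' ((hEdge u v hu hv).mpr hH'e)) (by simpa using heG)
            · refine Or.inr ⟨?_, v, hv, ?_⟩
              · simp only [Set.mem_setOf_eq, Sym2.map_pair_eq, mem_edgeSet]; exact hH'e
              · simp
          · refine Or.inr ⟨?_, u, hu, ?_⟩
            · simp only [Set.mem_setOf_eq, Sym2.map_pair_eq, mem_edgeSet]; exact hH'e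
            · simp
        · refine Or.inl (Or.inl (Or.inr ?_))
          simp only [hD2, Set.mem_setOf_eq, Sym2.map_pair_eq, Set.mem_diff, mem_edgeSet]
          exact ⟨heH, hH'e⟩
      · -- `e` is an edge of `G` not mapping into `H`
        simp only [Set.mem_setOf_eq, Sym2.map_pair_eq, mem_edgeSet] at heH heG
        by_cases hG'e : G'.Adj u v
        · by_cases hu : u ∈ MG
          · by_cases hv : v ∈ MG
            · exact absurd (hH' ((hEdge u v hu hv).mp hG'e)) heH
            · refine Or.inl (Or.inr ⟨?_, v, hv, ?_⟩)
              · exact (G'.mem_edgeSet).mpr hG'e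
              · simp
          · refine Or.inl (Or.inr ⟨?_, u, hu, ?_⟩)
            · exact (G'.mem_edgeSet).mpr hG'e
            · simp
        · refine Or.inl (Or.inl (Or.inl ?_))
          simp only [hD1, Set.mem_diff, mem_edgeSet]
          exact ⟨heG, hG'e⟩
  -- counting
  letI : Fintype (Classes K) := Fintype.ofFinite _
  have fiberG : ∀ s : Set V, s.ncard = ∑ S : Classes K, (s ∩ {v | cls G' K hKG v = S}).ncard := by
    intro s
    rw [Set.ncard_eq_toFinset_card' s,
      Finset.card_eq_sum_card_fiberwise (f := fun v => cls G' K hKG v) (t := Finset.univ)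
        (fun x _ => Finset.mem_univ _)]
    apply Finset.sum_congr rfl
    intro S _
    have : s.toFinset.filter (fun v => cls G' K hKG v = S)
        = (s ∩ {v | cls G' K hKG v = S}).toFinset := by
      ext v
      simp [Set.mem_toFinset]
    rw [this, ← Set.ncard_eq_toFinset_card']
  have fiberH : ∀ s : Set W, s.ncard = ∑ S : Classes K, (s ∩ {w | cls H' K hKH w = S}).ncard := by
    intro s
    rw [Set.ncard_eq_toFinset_card' s,
      Finset.card_eq_sum_card_fiberwise (f := fun w => cls H' K hKH w) (t := Finset.univ)
        (fun x _ => Finset.mem_univ _)]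
    apply Finset.sum_congr rfl
    intro S _
    have : s.toFinset.filter (fun w => cls H' K hKH w = S)
        = (s ∩ {w | cls H' K hKH w = S}).toFinset := by
      ext w
      simp [Set.mem_toFinset]
    rw [this, ← Set.ncard_eq_toFinset_card']
  have hBGcard : (MGᶜ : Set V).ncard
      = ∑ S : Classes K, (aCnt G' K hKG S - aCnt H' K hKH S) * S.out.n := by
    rw [fiberG MGᶜ]
    apply Finset.sum_congr rfl
    intro S _
    have hset : MGᶜ ∩ {v | cls G' K hKG v = S}
        = {v | cls G' K hKG v = S ∧ aCnt H' K hKH S ≤ idx G' K hKG (G'.connectedComponentMk v)} := by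
      ext v
      simp only [Set.mem_inter_iff, Set.mem_compl_iff, Set.mem_setOf_eq, hMGchar v, not_lt]
      constructor
      · rintro ⟨hbad, hS⟩
        rw [hS] at hbad
        exact ⟨hS, hbad⟩
      · rintro ⟨hS, hbad⟩
        refine ⟨by rw [hS]; exact hbad, hS⟩
    rw [hset, ← Nat.card_coe_set_eq,
      card_classP G' K hKG S (fun i => aCnt H' K hKH S ≤ i), card_fin_ge]
  have hBHcard : (MHᶜ : Set W).ncard
      = ∑ S : Classes K, (aCnt H' K hKH S - aCnt G' K hKG S) * S.out.n := by
    rw [fiberH MHᶜ]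
    apply Finset.sum_congr rfl
    intro S _
    have hset : MHᶜ ∩ {w | cls H' K hKH w = S}
        = {w | cls H' K hKH w = S ∧ aCnt G' K hKG S ≤ idx H' K hKH (H'.connectedComponentMk w)} := by
      ext w
      simp only [Set.mem_inter_iff, Set.mem_compl_iff, Set.mem_setOf_eq, hMHchar w, not_lt]
      constructor
      · rintro ⟨hbad, hS⟩
        rw [hS] at hbad
        exact ⟨hS, hbad⟩
      · rintro ⟨hS, hbad⟩
        refine ⟨by rw [hS]; exact hbad, hS⟩
    rw [hset, ← Nat.card_coe_set_eq,
      card_classP H' K hKH S (fun i => aCnt G' K hKG S ≤ i), card_fin_ge]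
  have hAScard : ∀ S : Classes K,
      {v : V | cls G' K hKG v = S}.ncard = aCnt G' K hKG S * S.out.n := by
    intro S
    have hset : {v : V | cls G' K hKG v = S}
        = {v | cls G' K hKG v = S ∧ (fun _ : ℕ => True) (idx G' K hKG (G'.connectedComponentMk v))} := by
      ext v; simp
    rw [hset, ← Nat.card_coe_set_eq, card_classP G' K hKG S (fun _ => True),
      card_fin_true _ _ (fun _ => trivial)]
  have hBScard : ∀ S : Classes K,
      {w : W | cls H' K hKH w = S}.ncard = aCnt H' K hKH S * S.out.n := by
    intro S
    have hset : {w : W | cls H' K hKH w = S}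
        = {w | cls H' K hKH w = S ∧ (fun _ : ℕ => True) (idx H' K hKH (H'.connectedComponentMk w))} := by
      ext w; simp
    rw [hset, ← Nat.card_coe_set_eq, card_classP H' K hKH S (fun _ => True),
      card_fin_true _ _ (fun _ => trivial)]
  -- process the hypothesis `hsum`
  rw [finsum_eq_sum_of_fintype] at hsum
  simp only [setA_eq G' K hKG, setA_eq H' K hKH] at hsum
  have hperS : ∀ a b m : ℕ, (((a - b) * m + (b - a) * m : ℕ) : ℝ)
      = |((a * m : ℕ) : ℝ) - ((b * m : ℕ) : ℝ)| := by
    intro a b m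
    rcases le_total a b with h | h
    · rw [Nat.sub_eq_zero_of_le h, Nat.zero_mul, Nat.zero_add]
      have hmm : a * m ≤ b * m := Nat.mul_le_mul_right m h
      have h1 : (b - a) * m = b * m - a * m := Nat.sub_mul b a m
      rw [h1, Nat.cast_sub hmm, abs_sub_comm,
        abs_of_nonneg (by rw [sub_nonneg]; exact_mod_cast hmm)]
    · rw [Nat.sub_eq_zero_of_le h, Nat.zero_mul, Nat.add_zero]
      have hmm : b * m ≤ a * m := Nat.mul_le_mul_right m h
      have h1 : (a - b) * m = a * m - b * m := Nat.sub_mul a b m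
      rw [h1, Nat.cast_sub hmm,
        abs_of_nonneg (by rw [sub_nonneg]; exact_mod_cast hmm)]
  have hnR : (0 : ℝ) < n := by exact_mod_cast hnpos
  have key : ((MGᶜ : Set V).ncard + (MHᶜ : Set W).ncard : ℝ) ≤ κ * n := by
    have e1 : ((MGᶜ : Set V).ncard + (MHᶜ : Set W).ncard : ℝ)
        = ∑ S : Classes K, |({v : V | cls G' K hKG v = S}.ncard : ℝ)
            - ({w : W | cls H' K hKH w = S}.ncard : ℝ)| := by
      rw [hBGcard, hBHcard]
      push_cast
      rw [← Finset.sum_add_distrib]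
      apply Finset.sum_congr rfl
      intro S _
      rw [hAScard S, hBScard S]
      have := hperS (aCnt G' K hKG S) (aCnt H' K hKH S) S.out.n
      push_cast at this ⊢
      exact this
    rw [e1]
    have e2 : ∀ S : Classes K, |({v : V | cls G' K hKG v = S}.ncard : ℝ)
        - ({w : W | cls H' K hKH w = S}.ncard : ℝ)|
        = n * |({v : V | cls G' K hKG v = S}.ncard : ℝ) / n
            - ({w : W | cls H' K hKH w = S}.ncard : ℝ) / n| := by
      intro S
      rw [div_sub_div_same, abs_div, abs_of_nonneg (le_of_lt hnR),
        mul_div_cancel₀ _ (ne_of_gt hnR)]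
    calc ∑ S : Classes K, |({v : V | cls G' K hKG v = S}.ncard : ℝ)
            - ({w : W | cls H' K hKH w = S}.ncard : ℝ)|
        = n * ∑ S : Classes K, |({v : V | cls G' K hKG v = S}.ncard : ℝ) / n
            - ({w : W | cls H' K hKH w = S}.ncard : ℝ) / n| := by
          rw [Finset.mul_sum]
          exact Finset.sum_congr rfl (fun S _ => e2 S)
      _ ≤ n * κ := by
          apply mul_le_mul_of_nonneg_left (le_of_lt hsum) (le_of_lt hnR)
      _ = κ * n := mul_comm _ _
  -- bounds on the four pieces
  have hdG'deg : ∀ v, (G'.neighborSet v).ncard ≤ d := fun v =>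
    le_trans (Set.ncard_le_ncard (fun x hx => hG' hx) (Set.toFinite _)) (hdG v)
  have hdH'deg : ∀ w, (H'.neighborSet w).ncard ≤ d := fun w =>
    le_trans (Set.ncard_le_ncard (fun x hx => hH' hx) (Set.toFinite _)) (hdH w)
  have hT1bound : (T1.ncard : ℝ) ≤ d * (MGᶜ : Set V).ncard := by
    exact_mod_cast Nat.cast_le.mpr (card_touch G' d hdG'deg MGᶜ)
  have hT2bound : (T2.ncard : ℝ) ≤ d * (MHᶜ : Set W).ncard := by
    have hsub2 : T2 ⊆ {e : Sym2 V | e.map ρ ∈ {f ∈ H'.edgeSet | ∃ w ∈ (MHᶜ : Set W), w ∈ f}} := by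
      rintro e ⟨he1, v, hv, hve⟩
      exact ⟨he1, ρ v, hρnot v hv, Sym2.mem_map.mpr ⟨v, hve, rfl⟩⟩
    have : T2.ncard ≤ {f ∈ H'.edgeSet | ∃ w ∈ (MHᶜ : Set W), w ∈ f}.ncard := by
      calc T2.ncard ≤ {e : Sym2 V | e.map ρ ∈ {f ∈ H'.edgeSet | ∃ w ∈ (MHᶜ : Set W), w ∈ f}}.ncard :=
            Set.ncard_le_ncard hsub2 (Set.toFinite _)
        _ = {f ∈ H'.edgeSet | ∃ w ∈ (MHᶜ : Set W), w ∈ f}.ncard := sym2_preimage_card ρ _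
    exact_mod_cast Nat.cast_le.mpr (le_trans this (card_touch H' d hdH'deg MHᶜ))
  have hD2bound : (D2.ncard : ℝ) ≤ ε * d * n := by
    rw [hD2, sym2_preimage_card ρ _]
    exact hHdel
  -- put everything together
  refine ⟨ρ, ?_⟩
  have hunion : (symmDiff {e : Sym2 V | e.map ρ ∈ H.edgeSet} G.edgeSet).ncard
      ≤ D1.ncard + D2.ncard + T1.ncard + T2.ncard := by
    calc (symmDiff {e : Sym2 V | e.map ρ ∈ H.edgeSet} G.edgeSet).ncard
        ≤ (D1 ∪ D2 ∪ T1 ∪ T2).ncard := Set.ncard_le_ncard hsubset (Set.toFinite _)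
      _ ≤ (D1 ∪ D2 ∪ T1).ncard + T2.ncard := Set.ncard_union_le _ _
      _ ≤ (D1 ∪ D2).ncard + T1.ncard + T2.ncard := by
          exact add_le_add_left (Set.ncard_union_le _ _) _
      _ ≤ D1.ncard + D2.ncard + T1.ncard + T2.ncard := by
          exact add_le_add_left (add_le_add_left (Set.ncard_union_le _ _) _) _
  calc ((symmDiff {e : Sym2 V | e.map ρ ∈ H.edgeSet} G.edgeSet).ncard : ℝ)
      ≤ (D1.ncard : ℝ) + D2.ncard + T1.ncard + T2.ncard := by exact_mod_cast hunion
    _ ≤ (ε * d * n) + (ε * d * n) + (d * (MGᶜ : Set V).ncard) + (d * (MHᶜ : Set W).ncard) := by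
        apply add_le_add (add_le_add (add_le_add hGdel hD2bound) hT1bound) hT2bound
    _ = 2 * ε * d * n + d * (((MGᶜ : Set V).ncard : ℝ) + ((MHᶜ : Set W).ncard : ℝ)) := by ring
    _ ≤ 2 * ε * d * n + d * (κ * n) := by
        apply add_le_add_right
        apply mul_le_mul_of_nonneg_left key (by positivity)
    _ = (2 * ε * d + κ * d) * n := by ring
    _ ≤ δ * n := by
        apply mul_le_mul_of_nonneg_right (le_of_lt hδ) (le_of_lt hnR)
end
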